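/- Let R be a commutative ring, S ⊆ reg(R) a multiplicatively closed subset, and I an S-prime ideal of R. Then I is an S-n-ideal of R if and only if (I : s) = √0 for some s ∈ S. -/

import Mathlib

/-- `I` is an `S`-`n`-ideal: `I` is disjoint from `S` and there is `s ∈ S` such that
whenever `a * b ∈ I` and `s * a` is not nilpotent, then `s * b ∈ I`. -/
def IsSnIdeal {R : Type*} [CommRing R] (S : Set R) (I : Ideal R) : Prop :=
  Disjoint S (I : Set R) ∧
    ∃ s ∈ S, ∀ a b : R, a * b ∈ I → s * a ∉ nilradical R → s * b ∈ I

/-- `I` is an `n`-ideal: `I` is proper and `a * b ∈ I` with `a` not nilpotent implies `b ∈ I`. -/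
def IsNIdeal {R : Type*} [CommRing R] (I : Ideal R) : Prop :=
  I ≠ ⊤ ∧ ∀ a b : R, a * b ∈ I → a ∉ nilradical R → b ∈ I

/-- `I` is an `S`-prime ideal. -/
def IsSPrime {R : Type*} [CommRing R] (S : Set R) (I : Ideal R) : Prop :=
  Disjoint S (I : Set R) ∧
    ∃ s ∈ S, ∀ a b : R, a * b ∈ I → s * a ∈ I ∨ s * b ∈ I

theorem stmt_7 {R : Type*} [CommRing R] (S : Submonoid R) (I : Ideal R)
    (hreg : (S : Set R) ⊆ {r : R | r ∈ nonZeroDivisors R})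
    (hprime : IsSPrime (S : Set R) I) :
    IsSnIdeal (S : Set R) I ↔ ∃ s ∈ S, I.colon (Ideal.span {s}) = nilradical R := by
  obtain ⟨hdisj, t, htS, ht⟩ := hprime
  have htI : t ∉ (I : Set R) := Set.disjoint_left.mp hdisj htS
  have hnt : Nontrivial R := by
    refine nontrivial_of_ne t 0 fun h => htI ?_
    simp [h]
  -- cancellation of elements of S out of the nilradical
  have hcancel : ∀ x ∈ S, ∀ r : R, x * r ∈ nilradical R → r ∈ nilradical R := by
    intro x hx r hnil
    obtain ⟨n, hn⟩ := hnil
    refine ⟨n, ?_⟩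
    have hxreg : (x : R) ^ n ∈ nonZeroDivisors R := pow_mem (hreg hx) n
    refine hxreg.2 _ ?_
    rw [mul_comm, ← mul_pow]
    exact hn
  -- elements of S are not nilpotent
  have hSnil : ∀ x ∈ S, x ∉ nilradical R := by
    intro x hx hnil
    obtain ⟨n, hn⟩ := hnil
    have hxreg : (x : R) ^ n ∈ nonZeroDivisors R := pow_mem (hreg hx) n
    rw [hn] at hxreg
    exact zero_notMem_nonZeroDivisors hxreg
  -- key: if r^n ∈ I then t^k * r ∈ I for some k
  have key : ∀ n : ℕ, ∀ r : R, r ^ n ∈ I → ∃ k : ℕ, t ^ k * r ∈ I := by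
    intro n
    induction n with
    | zero =>
      intro r hr
      exact ⟨0, by simpa using I.mul_mem_left 1 (I.mul_mem_left r hr)⟩
    | succ n ih =>
      intro r hr
      rcases n with _ | m
      · exact ⟨0, by simpa using hr⟩
      · rw [pow_succ, mul_comm] at hr
        rcases ht r (r ^ (m + 1)) hr with h | h
        · exact ⟨1, by simpa [pow_one] using h⟩
        · have h2 : (t * r) ^ (m + 1) ∈ I := by
            have : (t * r) ^ (m + 1) = t ^ m * (t * r ^ (m + 1)) := by ring
            rw [this]
            exact I.mul_mem_left _ h
          obtain ⟨k, hk⟩ := ih (t * r) h2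
          exact ⟨k + 1, by rw [pow_succ, mul_assoc]; exact hk⟩
  constructor
  · rintro ⟨-, s, hsS, hs⟩
    refine ⟨s, hsS, ?_⟩
    ext r
    rw [Ideal.mem_colon_span_singleton]
    constructor
    · intro hrs
      have hsr : s * r ∈ nilradical R := by
        by_contra h
        have := hs r s hrs h
        exact Set.disjoint_left.mp hdisj (S.mul_mem hsS hsS) this
      exact hcancel s hsS r hsr
    · intro hr
      obtain ⟨n, hn⟩ := hr
      obtain ⟨k, hk⟩ := key n r (by rw [hn]; exact I.zero_mem)
      have := hs (t ^ k) r hk (hSnil _ (S.mul_mem hsS (pow_mem htS k)))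
      rwa [mul_comm] at this
  · rintro ⟨s, hsS, hcol⟩
    refine ⟨hdisj, s * t, S.mul_mem hsS htS, fun a b hab hna => ?_⟩
    rcases ht a b hab with h | h
    · exfalso
      apply hna
      have hta : t * a ∈ nilradical R := by
        rw [← hcol, Ideal.mem_colon_span_singleton]
        exact I.mul_mem_right s h
      have := (nilradical R).mul_mem_left s hta
      rwa [← mul_assoc] at this
    · have := I.mul_mem_left s h
      rwa [← mul_assoc] at this
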